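/- For every natural number n ≥ 1, the n-th Lucas number satisfies L_n = Σ_{k=0}^{⌊n/2⌋} (n/(n−k)) · C(n−k, k), where each term (n/(n−k))·C(n−k,k) is a rational number that is in fact an integer; equivalently, multiplying through, Σ_{k=0}^{⌊n/2⌋} n·C(n−k,k)/(n−k) = L_n as an identity of rationals. -/

import Mathlib

open Finset

/-- The Lucas numbers: `L 0 = 2`, `L 1 = 1`, `L (n+2) = L (n+1) + L n`. -/
def lucas : ℕ → ℕ
  | 0 => 2
  | 1 => 1
  | n + 2 => lucas (n + 1) + lucas n

lemma lucas_eq : ∀ n, lucas (n + 1) = Nat.fib (n + 2) + Nat.fib n := by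
  intro n
  induction n using Nat.strong_induction_on with
  | _ n ih =>
    match n with
    | 0 => rfl
    | 1 => rfl
    | (m + 2) =>
      have h1 := ih (m + 1) (by omega)
      have h0 := ih m (by omega)
      show lucas (m + 2) + lucas (m + 1) = _
      rw [h1, h0, Nat.fib_add_two (n := m + 2), Nat.fib_add_two (n := m)]
      ring

lemma fib_sum (n : ℕ) :
    ∑ k ∈ Finset.range (n + 1), Nat.choose (n - k) k = Nat.fib (n + 1) := by
  rw [Nat.fib_succ_eq_sum_choose, Finset.Nat.sum_antidiagonal_eq_sum_range_succ_mk]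
  rw [← Finset.sum_range_reflect]
  refine Finset.sum_congr rfl (fun k hk => ?_)
  simp only [Finset.mem_range] at hk
  congr 1
  omega

lemma fib_sum' (n : ℕ) :
    ∑ k ∈ Finset.range (n / 2 + 1), Nat.choose (n - k) k = Nat.fib (n + 1) := by
  rw [← fib_sum]
  refine Finset.sum_subset (by intro x hx; simp_all; omega) (fun x hx hx2 => ?_)
  simp only [Finset.mem_range] at hx hx2
  exact Nat.choose_eq_zero_of_lt (by omega)

lemma nat_key (n k : ℕ) (hk1 : 1 ≤ k) (hk : k ≤ n / 2) :
    n * Nat.choose (n - k) k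
      = (n - k) * Nat.choose (n - k) k + (n - k) * Nat.choose (n - k - 1) (k - 1) := by
  have hd : 1 ≤ n - k := by omega
  have h := Nat.add_one_mul_choose_eq (n - k - 1) (k - 1)
  rw [show n - k - 1 + 1 = n - k by omega, show k - 1 + 1 = k by omega] at h
  obtain ⟨a, rfl⟩ : ∃ a, n = a + k := ⟨n - k, by omega⟩
  simp only [Nat.add_sub_cancel] at h ⊢
  rw [h]; ring

lemma termq (n k : ℕ) (hn : 1 ≤ n) (hk : k ≤ n / 2) :
    ((n : ℚ) / ((n : ℚ) - (k : ℚ))) * (Nat.choose (n - k) k : ℚ)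
      = (Nat.choose (n - k) k : ℚ)
        + if k = 0 then 0 else (Nat.choose (n - k - 1) (k - 1) : ℚ) := by
  have hd : 1 ≤ n - k := by omega
  have hcast : (n : ℚ) - (k : ℚ) = ((n - k : ℕ) : ℚ) := by
    push_cast [Nat.cast_sub (by omega : k ≤ n)]; ring
  have hne : (n : ℚ) - (k : ℚ) ≠ 0 := by
    rw [hcast]; exact_mod_cast (by omega : n - k ≠ 0)
  rcases Nat.eq_zero_or_pos k with hk0 | hk0
  · subst hk0
    simp only [Nat.cast_zero, Nat.sub_zero, Nat.choose_zero_right, Nat.cast_one, mul_one,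
      if_pos rfl, if_true, add_zero]
    rw [div_eq_iff (by simpa using hne)]; ring
  · rw [if_neg (by omega)]
    rw [div_mul_eq_mul_div, div_eq_iff hne, hcast]
    have h := congrArg (Nat.cast : ℕ → ℚ) (nat_key n k hk0 hk)
    push_cast at h
    linarith

theorem stmt_16 (n : ℕ) (hn : 1 ≤ n) :
    (∀ k : ℕ, k ≤ n / 2 →
        ∃ z : ℤ, ((n : ℚ) / ((n : ℚ) - (k : ℚ))) * (Nat.choose (n - k) k : ℚ) = z) ∧
      (∑ k ∈ Finset.range (n / 2 + 1),
          ((n : ℚ) / ((n : ℚ) - (k : ℚ))) * (Nat.choose (n - k) k : ℚ)) = lucas n := by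
  constructor
  · intro k hk
    rw [termq n k hn hk]
    rcases Nat.eq_zero_or_pos k with h | h
    · exact ⟨Nat.choose (n - k) k, by simp [h]⟩
    · exact ⟨Nat.choose (n - k) k + Nat.choose (n - k - 1) (k - 1),
        by rw [if_neg (by omega)]; push_cast; ring⟩
  · rw [Finset.sum_congr rfl (fun k hk => termq n k hn (by simp at hk; omega)),
      Finset.sum_add_distrib]
    have h1 : (∑ k ∈ Finset.range (n / 2 + 1), (Nat.choose (n - k) k : ℚ))
        = (Nat.fib (n + 1) : ℚ) := by rw [← Nat.cast_sum, fib_sum']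
    have h2 : (∑ k ∈ Finset.range (n / 2 + 1),
        (if k = 0 then (0:ℚ) else (Nat.choose (n - k - 1) (k - 1) : ℚ)))
        = (Nat.fib (n - 1) : ℚ) := by
      rw [Finset.sum_range_succ']
      simp only [Nat.add_sub_cancel, Nat.add_eq_zero, one_ne_zero, and_false, if_false,
        if_pos rfl, if_true, add_zero]
      rcases Nat.lt_or_ge n 2 with h2 | h2
      · interval_cases n <;> simp
      · have hhalf : n / 2 = (n - 2) / 2 + 1 := by omega
        have : ∀ i ∈ Finset.range (n / 2), (Nat.choose (n - (i + 1) - 1) i : ℚ)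
            = (Nat.choose ((n - 2) - i) i : ℚ) := by
          intro i hi; congr 2; omega
        rw [Finset.sum_congr rfl this, hhalf, show n - 1 = (n - 2) + 1 by omega]
        rw [← Nat.cast_sum, fib_sum' (n - 2)]
    rw [h1, h2]
    obtain ⟨m, rfl⟩ : ∃ m, n = m + 1 := ⟨n - 1, by omega⟩
    rw [lucas_eq m]
    push_cast
    simp
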